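/- Let m = 2p ≥ 2 be an even integer and let Ŵ⁺ be the group with presentation ⟨z, s₀, s₁, s_m | z² = s₀² = s₁² = s_m² = 1, (s₀s₁)² = (s₀s_m)² = (s₁s_m)^m = z, z s_i = s_i z for i ∈ {0,1,m}⟩. Then Ŵ⁺ is a finite group of order 8m. -/

import Mathlib

/-- Generators of the double covering of `W = ℤ₂ × D_{2m}`: the central element `z`
and the lifted reflections `s₀`, `s₁`, `s_m`. -/
inductive Gen : Type
  | z | s0 | s1 | sm
deriving DecidableEq

open FreeGroup

/-- Relators of the positive double covering `Ŵ⁺` of `ℤ₂ × D_{2m}` for even `m`: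
`z² = s₀² = s₁² = s_m² = 1`, `(s₀s₁)² = (s₀s_m)² = (s₁s_m)^m = z`,
and `z` commutes with the generators. -/
def relsEvenPos (m : ℕ) : Set (FreeGroup Gen) :=
  { (of Gen.z) ^ 2, (of Gen.s0) ^ 2, (of Gen.s1) ^ 2, (of Gen.sm) ^ 2,
    (of Gen.s0 * of Gen.s1) ^ 2 * (of Gen.z)⁻¹,
    (of Gen.s0 * of Gen.sm) ^ 2 * (of Gen.z)⁻¹,
    (of Gen.s1 * of Gen.sm) ^ m * (of Gen.z)⁻¹,
    of Gen.z * of Gen.s0 * (of Gen.z)⁻¹ * (of Gen.s0)⁻¹,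
    of Gen.z * of Gen.s1 * (of Gen.z)⁻¹ * (of Gen.s1)⁻¹,
    of Gen.z * of Gen.sm * (of Gen.z)⁻¹ * (of Gen.sm)⁻¹ }

namespace WposAux

open DihedralGroup

variable (m : ℕ)

/-- The presented group. -/
abbrev P (m : ℕ) := PresentedGroup (relsEvenPos m)

/-- `z` in the presented group. -/
def Z : P m := PresentedGroup.of Gen.z
/-- `s₀`. -/
def S0 : P m := PresentedGroup.of Gen.s0
/-- `s₁`. -/
def S1 : P m := PresentedGroup.of Gen.s1
/-- `s_m`. -/
def SM : P m := PresentedGroup.of Gen.sm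
/-- the rotation `a = s₁ s_m`. -/
def a : P m := S1 m * SM m

variable {m}

lemma rel_one {r : FreeGroup Gen} (h : r ∈ relsEvenPos m) :
    (PresentedGroup.mk (relsEvenPos m) r : P m) = 1 :=
  (QuotientGroup.eq_one_iff _).2 (Subgroup.subset_normalClosure h)

lemma hZ2 : (Z m) ^ 2 = 1 := by
  have := rel_one (m := m) (r := (of Gen.z) ^ 2) (by simp [relsEvenPos])
  simpa [Z, PresentedGroup.of] using this

lemma hS02 : (S0 m) ^ 2 = 1 := by
  have := rel_one (m := m) (r := (of Gen.s0) ^ 2) (by simp [relsEvenPos])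
  simpa [S0, PresentedGroup.of] using this

lemma hS12 : (S1 m) ^ 2 = 1 := by
  have := rel_one (m := m) (r := (of Gen.s1) ^ 2) (by simp [relsEvenPos])
  simpa [S1, PresentedGroup.of] using this

lemma hSM2 : (SM m) ^ 2 = 1 := by
  have := rel_one (m := m) (r := (of Gen.sm) ^ 2) (by simp [relsEvenPos])
  simpa [SM, PresentedGroup.of] using this

lemma hZinv : (Z m)⁻¹ = Z m := by
  have := hZ2 (m := m); rw [sq] at this; exact inv_eq_of_mul_eq_one_right this
lemma hS0inv : (S0 m)⁻¹ = S0 m := by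
  have := hS02 (m := m); rw [sq] at this; exact inv_eq_of_mul_eq_one_right this
lemma hS1inv : (S1 m)⁻¹ = S1 m := by
  have := hS12 (m := m); rw [sq] at this; exact inv_eq_of_mul_eq_one_right this
lemma hSMinv : (SM m)⁻¹ = SM m := by
  have := hSM2 (m := m); rw [sq] at this; exact inv_eq_of_mul_eq_one_right this

lemma h01 : (S0 m * S1 m) ^ 2 = Z m := by
  have := rel_one (m := m) (r := (of Gen.s0 * of Gen.s1) ^ 2 * (of Gen.z)⁻¹)
    (by simp [relsEvenPos])
  have h : (S0 m * S1 m) ^ 2 * (Z m)⁻¹ = 1 := by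
    simpa [S0, S1, Z, PresentedGroup.of] using this
  rwa [mul_inv_eq_one] at h

lemma h0m : (S0 m * SM m) ^ 2 = Z m := by
  have := rel_one (m := m) (r := (of Gen.s0 * of Gen.sm) ^ 2 * (of Gen.z)⁻¹)
    (by simp [relsEvenPos])
  have h : (S0 m * SM m) ^ 2 * (Z m)⁻¹ = 1 := by
    simpa [S0, SM, Z, PresentedGroup.of] using this
  rwa [mul_inv_eq_one] at h

lemma h1m : (a m) ^ m = Z m := by
  have := rel_one (m := m) (r := (of Gen.s1 * of Gen.sm) ^ m * (of Gen.z)⁻¹)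
    (by simp [relsEvenPos])
  have h : (S1 m * SM m) ^ m * (Z m)⁻¹ = 1 := by
    simpa [S1, SM, Z, PresentedGroup.of] using this
  rw [a]
  rwa [mul_inv_eq_one] at h

lemma Z_comm_gen (g : Gen) : Z m * PresentedGroup.of g = PresentedGroup.of g * Z m := by
  have key : ∀ (x : P m), Z m * x * (Z m)⁻¹ * x⁻¹ = 1 → Z m * x = x * Z m := by
    intro x h
    have h2 : Z m * x * (Z m)⁻¹ = x := mul_inv_eq_one.mp h
    exact mul_inv_eq_iff_eq_mul.mp h2
  cases g
  · rfl
  · refine key _ ?_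
    have := rel_one (m := m)
      (r := of Gen.z * of Gen.s0 * (of Gen.z)⁻¹ * (of Gen.s0)⁻¹) (by simp [relsEvenPos])
    simpa [S0, Z, PresentedGroup.of] using this
  · refine key _ ?_
    have := rel_one (m := m)
      (r := of Gen.z * of Gen.s1 * (of Gen.z)⁻¹ * (of Gen.s1)⁻¹) (by simp [relsEvenPos])
    simpa [S1, Z, PresentedGroup.of] using this
  · refine key _ ?_
    have := rel_one (m := m)
      (r := of Gen.z * of Gen.sm * (of Gen.z)⁻¹ * (of Gen.sm)⁻¹) (by simp [relsEvenPos])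
    simpa [SM, Z, PresentedGroup.of] using this

lemma Z_central (x : P m) : Commute (Z m) x := by
  have hx : x ∈ Subgroup.centralizer {Z m} := by
    refine PresentedGroup.generated_by _ _ (fun j => ?_) x
    intro h hh
    simp only [Set.mem_singleton_iff] at hh
    subst hh
    exact Z_comm_gen j
  exact Subgroup.mem_centralizer_iff.1 hx (Z m) rfl

end WposAux

namespace WposAux

open DihedralGroup

variable {m : ℕ}

/-- conjugation facts -/
lemma S1_a_S1 : S1 m * a m * S1 m = (a m)⁻¹ := by
  have h1 : (a m)⁻¹ = SM m * S1 m := by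
    rw [a, mul_inv_rev, hS1inv, hSMinv]
  rw [h1, a]
  have := hS12 (m := m)
  rw [sq] at this
  calc S1 m * (S1 m * SM m) * S1 m = (S1 m * S1 m) * SM m * S1 m := by group
    _ = SM m * S1 m := by rw [this, one_mul]

lemma S0_S1_S0 : S0 m * S1 m * S0 m = Z m * S1 m := by
  have h := h01 (m := m)
  rw [sq] at h
  have h2 : S0 m * S1 m * S0 m = Z m * (S1 m)⁻¹ := by
    rw [eq_mul_inv_iff_mul_eq, show S0 m * S1 m * S0 m * S1 m = S0 m * S1 m * (S0 m * S1 m) by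
      group]
    exact h
  rw [h2, hS1inv]

lemma S0_SM_S0 : S0 m * SM m * S0 m = Z m * SM m := by
  have h := h0m (m := m)
  rw [sq] at h
  have h2 : S0 m * SM m * S0 m = Z m * (SM m)⁻¹ := by
    rw [eq_mul_inv_iff_mul_eq, show S0 m * SM m * S0 m * SM m = S0 m * SM m * (S0 m * SM m) by
      group]
    exact h
  rw [h2, hSMinv]

lemma S0_a_S0 : S0 m * a m * S0 m = a m := by
  have hz := Z_central (m := m)
  have h1 := S0_S1_S0 (m := m)
  have h2 := S0_SM_S0 (m := m)
  have hs0 := hS02 (m := m); rw [sq] at hs0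
  have hzz := hZ2 (m := m); rw [sq] at hzz
  calc S0 m * a m * S0 m
      = S0 m * S1 m * (S0 m * S0 m) * SM m * S0 m := by rw [hs0, a]; group
    _ = (S0 m * S1 m * S0 m) * (S0 m * SM m * S0 m) := by group
    _ = (Z m * S1 m) * (Z m * SM m) := by rw [h1, h2]
    _ = Z m * (S1 m * Z m) * SM m := by group
    _ = Z m * (Z m * S1 m) * SM m := by rw [← (hz (S1 m)).eq]
    _ = (Z m * Z m) * (S1 m * SM m) := by group
    _ = a m := by rw [hzz, one_mul, a]

lemma semi_S1_a : SemiconjBy (S1 m) (a m) (a m)⁻¹ := by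
  unfold SemiconjBy
  have h := S1_a_S1 (m := m)
  calc S1 m * a m = (S1 m * a m * S1 m) * S1 m := by
        rw [mul_assoc (S1 m * a m), ← sq, hS12, mul_one]
    _ = (a m)⁻¹ * S1 m := by rw [h]

lemma semi_S0_a : SemiconjBy (S0 m) (a m) (a m) := by
  unfold SemiconjBy
  have h := S0_a_S0 (m := m)
  calc S0 m * a m = (S0 m * a m * S0 m) * S0 m := by
        rw [mul_assoc (S0 m * a m), ← sq, hS02, mul_one]
    _ = a m * S0 m := by rw [h]

lemma a_pow_2m : (a m) ^ (2 * m) = 1 := by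
  rw [mul_comm, pow_mul, h1m, hZ2]

/-- the "rotation powers" map `ZMod (2m) → P`. -/
noncomputable def Ahom : ZMod (2 * m) →+ Additive (P m) :=
  ZMod.lift (2 * m) ⟨zmultiplesHom _ (Additive.ofMul (a m)), by
    simp only [zmultiplesHom_apply]
    rw [← ofMul_zpow, zpow_natCast, a_pow_2m, ofMul_one]⟩

noncomputable def A (i : ZMod (2 * m)) : P m := Additive.toMul (Ahom i)

lemma A_intCast (k : ℤ) : (A ((k : ℤ) : ZMod (2 * m)) : P m) = (a m) ^ k := by
  rw [A, Ahom, ZMod.lift_coe]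
  simp [zmultiplesHom_apply, ← ofMul_zpow]

lemma A_add (i j : ZMod (2 * m)) : (A (i + j) : P m) = A i * A j := by
  rw [A, A, A, map_add]; rfl

lemma A_zero : (A 0 : P m) = 1 := by rw [A, map_zero]; rfl

lemma A_neg (i : ZMod (2 * m)) : (A (-i) : P m) = (A i)⁻¹ := by
  rw [A, A, map_neg]; rfl

lemma S1_A (j : ZMod (2 * m)) : S1 m * A j = A (-j) * S1 m := by
  obtain ⟨k, rfl⟩ := ZMod.intCast_surjective j
  rw [← Int.cast_neg, A_intCast, A_intCast]
  have := (semi_S1_a (m := m)).zpow_right k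
  rw [SemiconjBy, inv_zpow, ← zpow_neg] at this
  exact this

lemma S0_A (j : ZMod (2 * m)) : S0 m * A j = A j * S0 m := by
  obtain ⟨k, rfl⟩ := ZMod.intCast_surjective j
  rw [A_intCast]
  exact (semi_S0_a (m := m)).zpow_right k

lemma A_m_eq_Z : (A ((m : ℕ) : ZMod (2 * m)) : P m) = Z m := by
  have : (((m : ℤ)) : ZMod (2 * m)) = ((m : ℕ) : ZMod (2 * m)) := by push_cast; ring
  rw [← this, A_intCast, zpow_natCast, h1m]

end WposAux

namespace WposAux

open DihedralGroup

/-! Now everything with `m = 2 * p`. -/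

variable {p : ℕ}

/-- The central lift `t = s₀ a^{-p}`. -/
noncomputable def T (p : ℕ) : P (2 * p) := S0 (2 * p) * (A ((p : ℕ) : ZMod (2 * (2 * p))))⁻¹

lemma A_p_sq : (A ((p : ℕ) : ZMod (2 * (2 * p))) : P (2 * p)) *
    A ((p : ℕ) : ZMod (2 * (2 * p))) = Z (2 * p) := by
  rw [← A_add, ← A_m_eq_Z (m := 2 * p)]
  congr 1
  push_cast; ring

lemma T_sq : (T p) ^ 2 = Z (2 * p) := by
  set Ap := (A ((p : ℕ) : ZMod (2 * (2 * p))) : P (2 * p)) with hAp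
  have hcomm : S0 (2 * p) * Ap⁻¹ = Ap⁻¹ * S0 (2 * p) := by
    have := S0_A (m := 2 * p) (-((p : ℕ) : ZMod (2 * (2 * p))))
    rwa [A_neg] at this
  have hS0 := hS02 (m := 2 * p); rw [sq] at hS0
  have hsq : Ap * Ap = Z (2 * p) := A_p_sq
  have hzinv := hZinv (m := 2 * p)
  calc (T p) ^ 2 = S0 (2*p) * Ap⁻¹ * (S0 (2*p) * Ap⁻¹) := by rw [sq, T, ← hAp]
    _ = S0 (2*p) * (Ap⁻¹ * S0 (2*p)) * Ap⁻¹ := by group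
    _ = S0 (2*p) * (S0 (2*p) * Ap⁻¹) * Ap⁻¹ := by rw [← hcomm]
    _ = (S0 (2*p) * S0 (2*p)) * (Ap⁻¹ * Ap⁻¹) := by group
    _ = (Ap * Ap)⁻¹ := by rw [hS0, one_mul, mul_inv_rev]
    _ = Z (2 * p) := by rw [hsq, hzinv]

lemma T_pow4 : (T p) ^ 4 = 1 := by
  rw [show 4 = 2 * 2 from rfl, pow_mul, T_sq, hZ2]

lemma T_comm_S1 : T p * S1 (2 * p) = S1 (2 * p) * T p := by
  set Ap := (A ((p : ℕ) : ZMod (2 * (2 * p))) : P (2 * p)) with hAp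
  have h1 : Ap⁻¹ * S1 (2*p) = S1 (2*p) * Ap := by
    have := S1_A (m := 2 * p) ((p : ℕ) : ZMod (2 * (2 * p)))
    rw [A_neg] at this
    rw [hAp]; exact this.symm
  have hzc := Z_central (m := 2 * p)
  have hsq : Ap * Ap = Z (2 * p) := A_p_sq
  have h2 : S0 (2*p) * S1 (2*p) * S0 (2*p) = Z (2*p) * S1 (2*p) := S0_S1_S0
  have hS0 := hS02 (m := 2 * p); rw [sq] at hS0
  -- S1 * S0 = S0 * S1 * Z
  have step : S1 (2*p) * S0 (2*p) = S0 (2*p) * S1 (2*p) * Z (2*p) := by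
    calc S1 (2*p) * S0 (2*p) = (S0 (2*p) * S0 (2*p)) * (S1 (2*p) * S0 (2*p)) := by
          rw [hS0, one_mul]
      _ = S0 (2*p) * (S0 (2*p) * S1 (2*p) * S0 (2*p)) := by group
      _ = S0 (2*p) * (Z (2*p) * S1 (2*p)) := by rw [h2]
      _ = Z (2*p) * (S0 (2*p) * S1 (2*p)) := by
          rw [← mul_assoc, ← (hzc (S0 (2*p))).eq, mul_assoc]
      _ = S0 (2*p) * S1 (2*p) * Z (2*p) := (hzc _).eq
  have key : T p * S1 (2*p) = S0 (2*p) * S1 (2*p) * Ap := by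
    rw [T, ← hAp, mul_assoc, h1, ← mul_assoc]
  have key2 : S1 (2*p) * T p = S0 (2*p) * S1 (2*p) * (Z (2*p) * Ap⁻¹) := by
    rw [T, ← hAp, ← mul_assoc, step]; group
  rw [key, key2]
  congr 1
  rw [← hsq]; group

lemma T_comm_A (j : ZMod (2 * (2 * p))) : T p * A j = A j * T p := by
  set Ap := (A ((p : ℕ) : ZMod (2 * (2 * p))) : P (2 * p)) with hAp
  have h0 : S0 (2*p) * A j = A j * S0 (2*p) := S0_A _
  have h1 : Ap⁻¹ * A j = A j * Ap⁻¹ := by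
    rw [← A_neg, ← A_add, ← A_add, add_comm]
  calc T p * A j = S0 (2*p) * (Ap⁻¹ * A j) := by rw [T, ← hAp, mul_assoc]
    _ = S0 (2*p) * A j * Ap⁻¹ := by rw [h1, ← mul_assoc]
    _ = A j * (S0 (2*p) * Ap⁻¹) := by rw [h0]; group
    _ = A j * T p := by rw [T, ← hAp]

end WposAux

namespace WposAux

open DihedralGroup Multiplicative

/-! ### The concrete model: central product of `D_{4p}` and `ℤ/4`. -/

abbrev Dm (p : ℕ) := DihedralGroup (2 * (2 * p))
abbrev Mc := Multiplicative (ZMod 4)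

lemma r_inv {n : ℕ} (i : ZMod n) : (r i : DihedralGroup n)⁻¹ = r (-i) :=
  inv_eq_of_mul_eq_one_right (by rw [r_mul_r, add_neg_cancel]; rfl)

lemma sr_inv {n : ℕ} (i : ZMod n) : (sr i : DihedralGroup n)⁻¹ = sr i :=
  inv_eq_of_mul_eq_one_right (sr_mul_self i)

variable (p : ℕ)

def c (p : ℕ) : Dm p × Mc := (r ((2 * p : ℕ) : ZMod (2 * (2 * p))), ofAdd (2 : ZMod 4))

lemma neg_m_cast : -((2 * p : ℕ) : ZMod (2 * (2 * p))) = ((2 * p : ℕ) : ZMod (2 * (2 * p))) := by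
  rw [neg_eq_iff_add_eq_zero, ← Nat.cast_add, show 2 * p + 2 * p = 2 * (2 * p) by ring,
    ZMod.natCast_self]

lemma m_add_m : ((2 * p : ℕ) : ZMod (2 * (2 * p))) + ((2 * p : ℕ) : ZMod (2 * (2 * p))) = 0 := by
  rw [← Nat.cast_add, show 2 * p + 2 * p = 2 * (2 * p) by ring, ZMod.natCast_self]

lemma p_add_p : ((p : ℕ) : ZMod (2 * (2 * p))) + ((p : ℕ) : ZMod (2 * (2 * p)))
    = ((2 * p : ℕ) : ZMod (2 * (2 * p))) := by
  push_cast; ring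

lemma c_comm (g : Dm p × Mc) : Commute g (c p) := by
  obtain ⟨d, x⟩ := g
  have h1 : Commute d (r ((2 * p : ℕ) : ZMod (2 * (2 * p)))) := by
    cases d with
    | r j => unfold Commute SemiconjBy; rw [r_mul_r, r_mul_r, add_comm]
    | sr j =>
        unfold Commute SemiconjBy
        rw [sr_mul_r, r_mul_sr, sub_eq_add_neg, neg_m_cast]
  unfold Commute SemiconjBy
  rw [c, Prod.mk_mul_mk, Prod.mk_mul_mk, h1.eq, mul_comm x]

instance : (Subgroup.zpowers (c p)).Normal := by
  constructor
  intro n hn g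
  obtain ⟨k, rfl⟩ := Subgroup.mem_zpowers_iff.1 hn
  have h := ((c_comm p g).zpow_right k).eq
  rw [h, mul_assoc, mul_inv_cancel, mul_one]
  exact Subgroup.zpow_mem _ (Subgroup.mem_zpowers _) k

abbrev Gq (p : ℕ) := (Dm p × Mc) ⧸ Subgroup.zpowers (c p)

def mkG : Dm p × Mc →* Gq p := QuotientGroup.mk' _

lemma mkG_eq_one {x : Dm p × Mc} (h : x ∈ Subgroup.zpowers (c p)) : mkG p x = 1 :=
  (QuotientGroup.eq_one_iff x).2 h

/-- images of the generators in the concrete model. -/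
def fGen : Gen → Gq p
  | Gen.z => mkG p (r ((2 * p : ℕ) : ZMod (2 * (2 * p))), 1)
  | Gen.s0 => mkG p (r ((p : ℕ) : ZMod (2 * (2 * p))), ofAdd (1 : ZMod 4))
  | Gen.s1 => mkG p (sr 0, 1)
  | Gen.sm => mkG p (sr 1, 1)

lemma r_sq {n : ℕ} (i : ZMod n) : (r i : DihedralGroup n) ^ 2 = r (i + i) := by
  rw [sq, r_mul_r]

lemma sr_sq {n : ℕ} (i : ZMod n) : (sr i : DihedralGroup n) ^ 2 = 1 := by
  rw [sq, sr_mul_self]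

lemma mkG_eq_one' {x : Dm p × Mc} (h : x = c p ∨ x = 1) : mkG p x = 1 := by
  rcases h with h | h
  · exact h ▸ mkG_eq_one p (Subgroup.mem_zpowers _)
  · rw [h]; exact map_one _

lemma pair_eq_one {n : ℕ} {i : ZMod n} {x : Mc} (hi : i = 0) (hx : x = 1) :
    ((r i, x) : DihedralGroup n × Mc) = 1 := by subst hi; subst hx; rfl

lemma pair_eq_c {i : ZMod (2 * (2 * p))} {x : Mc} (hi : i = ((2 * p : ℕ) : ZMod (2 * (2 * p))))
    (hx : x = ofAdd (2 : ZMod 4)) : ((r i, x) : Dm p × Mc) = c p := by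
  subst hi; subst hx; rfl

lemma lift_rels : ∀ rl ∈ relsEvenPos (2 * p), FreeGroup.lift (fGen p) rl = 1 := by
  intro rl hrl
  simp only [relsEvenPos, Set.mem_insert_iff, Set.mem_singleton_iff] at hrl
  rcases hrl with h|h|h|h|h|h|h|h|h|h <;> subst h <;>
    simp only [_root_.map_mul, _root_.map_pow, _root_.map_inv, FreeGroup.lift_apply_of, fGen] <;>
    simp only [← _root_.map_inv (mkG p), ← _root_.map_pow (mkG p), ← _root_.map_mul (mkG p), Prod.mk_mul_mk,
      Prod.pow_mk, Prod.inv_mk, r_mul_r, r_mul_sr, sr_mul_r, sr_mul_sr, r_inv, sr_inv,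
      r_sq, sr_sq, one_mul, mul_one, one_pow, inv_one, sub_zero, sub_self, add_neg_cancel,
      r_one_pow, neg_m_cast, m_add_m, p_add_p] <;>
    apply mkG_eq_one'
  · exact Or.inr (pair_eq_one rfl rfl)
  · exact Or.inl (pair_eq_c p rfl (by decide))
  · exact Or.inr rfl
  · exact Or.inr rfl
  · exact Or.inl (pair_eq_c p rfl (by decide))
  · exact Or.inl (pair_eq_c p rfl (by decide))
  · exact Or.inr (pair_eq_one rfl rfl)
  · exact Or.inr (pair_eq_one (by linear_combination m_add_m p) (by decide))
  · exact Or.inr (pair_eq_one (by ring) rfl)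
  · exact Or.inr (pair_eq_one (by ring) rfl)

end WposAux

namespace WposAux

open DihedralGroup Multiplicative

variable (p : ℕ)

/-- The canonical homomorphism from the presented group to the concrete model. -/
noncomputable def phi : P (2 * p) →* Gq p := PresentedGroup.toGroup (lift_rels p)

@[simp] lemma phi_of (g : Gen) : phi p (PresentedGroup.of g) = fGen p g :=
  PresentedGroup.toGroup.of _

/-- powers of the central element `T`. -/
noncomputable def TpowHom : ZMod 4 →+ Additive (P (2 * p)) :=
  ZMod.lift 4 ⟨zmultiplesHom _ (Additive.ofMul (T p)), by
    simp only [zmultiplesHom_apply]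
    rw [← ofMul_zpow, zpow_natCast, T_pow4, ofMul_one]⟩

noncomputable def Tpow (y : ZMod 4) : P (2 * p) := Additive.toMul (TpowHom p y)

lemma Tpow_intCast (k : ℤ) : Tpow p ((k : ℤ) : ZMod 4) = (T p) ^ k := by
  rw [Tpow, TpowHom, ZMod.lift_coe]
  simp [zmultiplesHom_apply, ← ofMul_zpow]

lemma Tpow_add (x y : ZMod 4) : Tpow p (x + y) = Tpow p x * Tpow p y := by
  rw [Tpow, Tpow, Tpow, map_add]; rfl

lemma Tpow_zero : Tpow p 0 = 1 := by rw [Tpow, map_zero]; rfl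

lemma Tpow_two : Tpow p 2 = Z (2 * p) := by
  have : ((2 : ℤ) : ZMod 4) = (2 : ZMod 4) := by norm_num
  rw [← this, Tpow_intCast, show ((2 : ℤ)) = ((2 : ℕ) : ℤ) from rfl, zpow_natCast, T_sq]

/-- The dihedral part of the inverse map. -/
noncomputable def fD : Dm p → P (2 * p)
  | r i => A i
  | sr i => A (-i) * S1 (2 * p)

lemma fD_mul (d₁ d₂ : Dm p) : fD p (d₁ * d₂) = fD p d₁ * fD p d₂ := by
  have hs1 := hS12 (m := 2 * p); rw [sq] at hs1
  cases d₁ with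
  | r i =>
    cases d₂ with
    | r j => show A (i + j) = A i * A j; rw [A_add]
    | sr j =>
        show A (-(j - i)) * S1 (2 * p) = A i * (A (-j) * S1 (2 * p))
        rw [show -(j - i) = i + -j by ring, A_add, mul_assoc]
  | sr i =>
    cases d₂ with
    | r j =>
        show A (-(i + j)) * S1 (2 * p) = A (-i) * S1 (2 * p) * A j
        rw [mul_assoc, S1_A, show -(i + j) = -i + -j by ring, A_add, mul_assoc]
    | sr j =>
        show A (j - i) = A (-i) * S1 (2 * p) * (A (-j) * S1 (2 * p))
        rw [mul_assoc, ← mul_assoc (S1 (2 * p)), S1_A, neg_neg, mul_assoc, hs1, mul_one,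
          ← A_add, show -i + j = j - i by ring]

lemma T_comm_fD (d : Dm p) : Commute (fD p d) (T p) := by
  cases d with
  | r i => exact Commute.symm (T_comm_A i)
  | sr i =>
      exact Commute.mul_left (Commute.symm (T_comm_A (-i))) (Commute.symm (T_comm_S1))

lemma Tpow_comm_fD (d : Dm p) (y : ZMod 4) : fD p d * Tpow p y = Tpow p y * fD p d := by
  obtain ⟨k, rfl⟩ := ZMod.intCast_surjective y
  rw [Tpow_intCast]
  exact ((T_comm_fD p d).zpow_right k).eq

/-- The inverse homomorphism on the product. -/
noncomputable def psiHom : Dm p × Mc →* P (2 * p) :=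
  MonoidHom.mk' (fun g => fD p g.1 * Tpow p (toAdd g.2)) (by
    rintro ⟨d₁, x₁⟩ ⟨d₂, x₂⟩
    show fD p (d₁ * d₂) * Tpow p (toAdd (x₁ * x₂))
        = fD p d₁ * Tpow p (toAdd x₁) * (fD p d₂ * Tpow p (toAdd x₂))
    rw [toAdd_mul, Tpow_add, fD_mul]
    rw [mul_assoc, mul_assoc]
    congr 1
    rw [← mul_assoc, Tpow_comm_fD, mul_assoc])

lemma psiHom_c : psiHom p (c p) = 1 := by
  show fD p (r ((2 * p : ℕ) : ZMod (2 * (2 * p)))) * Tpow p (toAdd (ofAdd (2 : ZMod 4))) = 1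
  rw [toAdd_ofAdd]
  show A ((2 * p : ℕ) : ZMod (2 * (2 * p))) * Tpow p 2 = 1
  rw [Tpow_two, A_m_eq_Z (m := 2 * p)]
  have := hZ2 (m := 2 * p); rw [sq] at this; exact this

/-- The inverse homomorphism. -/
noncomputable def psi : Gq p →* P (2 * p) :=
  QuotientGroup.lift _ (psiHom p) (by
    intro x hx
    obtain ⟨k, rfl⟩ := Subgroup.mem_zpowers_iff.1 hx
    rw [MonoidHom.mem_ker, map_zpow, psiHom_c, one_zpow])

lemma psi_mkG (x : Dm p × Mc) : psi p (mkG p x) = psiHom p x := rfl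

lemma a_inv : ∀ {m : ℕ}, (a m)⁻¹ = SM m * S1 m := by
  intro m
  rw [a, mul_inv_rev, hS1inv, hSMinv]

lemma psi_phi (x : P (2 * p)) : psi p (phi p x) = x := by
  have key : (psi p).comp (phi p) = MonoidHom.id _ := by
    apply PresentedGroup.ext
    intro g
    have hs1 := hS12 (m := 2 * p); rw [sq] at hs1
    cases g with
    | z =>
        show psi p (phi p (PresentedGroup.of Gen.z)) = PresentedGroup.of Gen.z
        rw [phi_of]
        show psiHom p _ = _
        show fD p (r ((2 * p : ℕ) : ZMod (2 * (2 * p)))) * Tpow p (toAdd (1 : Mc)) = _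
        show A ((2 * p : ℕ) : ZMod (2 * (2 * p))) * Tpow p 0 = _
        rw [Tpow_zero, mul_one, A_m_eq_Z (m := 2 * p)]
        rfl
    | s0 =>
        show psi p (phi p (PresentedGroup.of Gen.s0)) = PresentedGroup.of Gen.s0
        rw [phi_of]
        show fD p (r ((p : ℕ) : ZMod (2 * (2 * p)))) * Tpow p (toAdd (ofAdd (1 : ZMod 4))) = _
        rw [toAdd_ofAdd]
        show A ((p : ℕ) : ZMod (2 * (2 * p))) * Tpow p 1 = _
        have h1 : ((1 : ℤ) : ZMod 4) = (1 : ZMod 4) := by norm_num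
        rw [← h1, Tpow_intCast, zpow_one, T]
        rw [← mul_assoc, ← S0_A, mul_assoc, mul_inv_cancel, mul_one]
        rfl
    | s1 =>
        show psi p (phi p (PresentedGroup.of Gen.s1)) = PresentedGroup.of Gen.s1
        rw [phi_of]
        show fD p (sr 0) * Tpow p (toAdd (1 : Mc)) = _
        show A (-0) * S1 (2 * p) * Tpow p 0 = _
        rw [Tpow_zero, mul_one, neg_zero, A_zero, one_mul]
        rfl
    | sm =>
        show psi p (phi p (PresentedGroup.of Gen.sm)) = PresentedGroup.of Gen.sm
        rw [phi_of]
        show fD p (sr 1) * Tpow p (toAdd (1 : Mc)) = _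
        show A (-1) * S1 (2 * p) * Tpow p 0 = _
        rw [Tpow_zero, mul_one]
        have h1 : ((-1 : ℤ) : ZMod (2 * (2 * p))) = (-1 : ZMod (2 * (2 * p))) := by norm_num
        rw [← h1, A_intCast, zpow_neg_one, a_inv, mul_assoc, hs1, mul_one]
        rfl
  calc psi p (phi p x) = ((psi p).comp (phi p)) x := rfl
    _ = x := by rw [key]; rfl

end WposAux

namespace WposAux

open DihedralGroup Multiplicative

variable (p : ℕ)

lemma A_natCast {m : ℕ} (n : ℕ) : (A ((n : ℕ) : ZMod (2 * m)) : P m) = (a m) ^ n := by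
  have h : ((n : ℤ) : ZMod (2 * m)) = ((n : ℕ) : ZMod (2 * m)) := by push_cast; ring
  rw [← h, A_intCast, zpow_natCast]

lemma Tpow_natCast (n : ℕ) : Tpow p ((n : ℕ) : ZMod 4) = (T p) ^ n := by
  have h : ((n : ℤ) : ZMod 4) = ((n : ℕ) : ZMod 4) := by push_cast; ring
  rw [← h, Tpow_intCast, zpow_natCast]

lemma phi_a : phi p (a (2 * p)) = mkG p (r 1, 1) := by
  have h : a (2 * p) = PresentedGroup.of Gen.s1 * PresentedGroup.of Gen.sm := rfl
  rw [h, _root_.map_mul, phi_of, phi_of]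
  show mkG p (sr 0, 1) * mkG p (sr 1, 1) = _
  rw [← _root_.map_mul (mkG p), Prod.mk_mul_mk, sr_mul_sr, mul_one, sub_zero]

lemma phi_A (hp : p ≠ 0) (j : ZMod (2 * (2 * p))) : phi p (A j) = mkG p (r j, 1) := by
  haveI : NeZero (2 * (2 * p)) := ⟨by omega⟩
  have hj : ((j.val : ℕ) : ZMod (2 * (2 * p))) = j := ZMod.natCast_rightInverse j
  rw [← hj, A_natCast, map_pow, phi_a, ← map_pow, Prod.pow_mk, one_pow, r_one_pow]

lemma phi_T (hp : p ≠ 0) : phi p (T p) = mkG p (1, ofAdd (1 : ZMod 4)) := by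
  have h : T p = S0 (2 * p) * (A ((p : ℕ) : ZMod (2 * (2 * p))))⁻¹ := rfl
  rw [h, _root_.map_mul, _root_.map_inv, phi_A p hp]
  have h0 : phi p (S0 (2 * p)) = mkG p (r ((p : ℕ) : ZMod (2 * (2 * p))), ofAdd (1 : ZMod 4)) :=
    phi_of p Gen.s0
  rw [h0, ← _root_.map_inv (mkG p), ← _root_.map_mul (mkG p), Prod.inv_mk, Prod.mk_mul_mk,
    mul_inv_cancel, inv_one, mul_one]

lemma phi_Tpow (hp : p ≠ 0) (y : ZMod 4) : phi p (Tpow p y) = mkG p (1, ofAdd y) := by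
  have hy : ((y.val : ℕ) : ZMod 4) = y := ZMod.natCast_rightInverse y
  rw [← hy, Tpow_natCast, map_pow, phi_T p hp, ← map_pow, Prod.pow_mk, one_pow]
  have : (ofAdd (1 : ZMod 4)) ^ (y.val : ℕ) = ofAdd (((y.val : ℕ) : ZMod 4)) := by
    rw [← ofAdd_nsmul, nsmul_eq_mul, mul_one]
  rw [this]

lemma phi_psi (hp : p ≠ 0) (g : Gq p) : phi p (psi p g) = g := by
  refine QuotientGroup.induction_on g ?_
  rintro ⟨d, x⟩
  show (phi p) ((psi p) (mkG p (d, x))) = mkG p (d, x)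
  rw [psi_mkG]
  show phi p (fD p d * Tpow p (toAdd x)) = mkG p (d, x)
  rw [_root_.map_mul, phi_Tpow p hp]
  cases d with
  | r i =>
      rw [show fD p (r i) = A i from rfl, phi_A p hp, ← _root_.map_mul (mkG p),
        Prod.mk_mul_mk, mul_one, one_mul, ofAdd_toAdd]
  | sr i =>
      have h : fD p (sr i) = A (-i) * S1 (2 * p) := rfl
      have h1 : phi p (S1 (2 * p)) = mkG p (sr 0, 1) := phi_of p Gen.s1
      rw [h, _root_.map_mul, phi_A p hp, h1, ← _root_.map_mul (mkG p), ← _root_.map_mul (mkG p)]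
      simp [sub_neg_eq_add]

lemma card_Gq (hp : p ≠ 0) : Nat.card (Gq p) = 8 * (2 * p) := by
  haveI : NeZero (2 * (2 * p)) := ⟨by omega⟩
  have h1 : Nat.card (Dm p × Mc) = 32 * p := by
    rw [Nat.card_prod, DihedralGroup.nat_card]
    have h4 : Nat.card Mc = 4 := by
      rw [Nat.card_eq_fintype_card]
      rfl
    rw [h4]; ring
  have h2 : Nat.card (Subgroup.zpowers (c p)) = 2 := by
    rw [Nat.card_zpowers]
    refine orderOf_eq_prime ?_ ?_
    · rw [c, Prod.pow_mk, r_sq]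
      exact pair_eq_one (m_add_m p) (by decide)
    · intro h
      have h2 : (ofAdd (2 : ZMod 4)) = (1 : Mc) := congrArg Prod.snd h
      exact absurd h2 (by decide)
  have h3 : Nat.card (Dm p × Mc) = Nat.card (Gq p) * Nat.card (Subgroup.zpowers (c p)) :=
    Subgroup.card_eq_card_quotient_mul_card_subgroup _
  rw [h1, h2] at h3
  omega

end WposAux

/-- For even `m = 2p ≥ 2`, the positive double covering `Ŵ⁺` of `ℤ₂ × D_{2m}`
is a finite group of order `8m`. -/
theorem WposEven_card (m p : ℕ) (hp : 1 ≤ p) (hm : m = 2 * p) :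
    Finite (PresentedGroup (relsEvenPos m)) ∧
      Nat.card (PresentedGroup (relsEvenPos m)) = 8 * m := by
  subst hm
  have hp' : p ≠ 0 := by omega
  haveI : NeZero (2 * (2 * p)) := ⟨by omega⟩
  have hinj : Function.Injective (WposAux.phi p) := fun x y h => by
    have hx := WposAux.psi_phi p x
    rw [← hx, h, WposAux.psi_phi]
  have hsurj : Function.Surjective (WposAux.phi p) :=
    fun g => ⟨WposAux.psi p g, WposAux.phi_psi p hp' g⟩
  haveI : Finite (WposAux.Gq p) := Quotient.finite _
  constructor
  · exact Finite.of_injective _ hinj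
  · rw [Nat.card_eq_of_bijective _ ⟨hinj, hsurj⟩, WposAux.card_Gq p hp']
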